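/- In the special case x, y ∈ V: if H[V] has minimum degree at least 0.9·|V| (within V), then for any distinct x, y ∈ V and any ℓ with 2 ≤ ℓ ≤ 2|V|/3, the graph H[V] contains an xy-path of length exactly ℓ. -/

import Mathlib

/-- If every vertex of a graph `G` on vertex set `V` has at least `0.9|V|` neighbours,
then for any distinct `x, y` and any `2 ≤ ℓ ≤ 2|V|/3`, `G` contains an `xy`-path of
length exactly `ℓ`. -/
theorem stmt15 {V : Type*} [Fintype V] [DecidableEq V] (G : SimpleGraph V) [DecidableRel G.Adj]
    (hdeg : ∀ v : V, (0.9 : ℝ) * (Fintype.card V : ℝ) ≤ (G.degree v : ℝ))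
    (x y : V) (hxy : x ≠ y) (ℓ : ℕ) (h2 : 2 ≤ ℓ)
    (hup : (ℓ : ℝ) ≤ 2 * (Fintype.card V : ℝ) / 3) :
    ∃ p : G.Walk x y, p.IsPath ∧ p.length = ℓ := by
  set n := Fintype.card V with hn
  have hn10 : (10 : ℝ) ≤ (n : ℝ) := by
    have h1 := hdeg x
    have h2 : G.degree x < n := G.degree_lt_card_verts x
    have h2' : (G.degree x : ℝ) ≤ (n : ℝ) - 1 := by
      have : (G.degree x : ℝ) + 1 ≤ (n : ℝ) := by exact_mod_cast h2
      linarith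
    linarith
  -- common neighbourhood bound
  have hinter : ∀ a b : V,
      (0.8 : ℝ) * (n : ℝ) ≤ ((G.neighborFinset a ∩ G.neighborFinset b).card : ℝ) := by
    intro a b
    have h := Finset.card_inter_add_card_union (G.neighborFinset a) (G.neighborFinset b)
    have hu : (G.neighborFinset a ∪ G.neighborFinset b).card ≤ n := Finset.card_le_univ _
    have ha := hdeg a
    have hb := hdeg b
    have ha' : ((G.neighborFinset a).card : ℝ) = (G.degree a : ℝ) := by
      rw [G.card_neighborFinset_eq_degree]
    have hb' : ((G.neighborFinset b).card : ℝ) = (G.degree b : ℝ) := by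
      rw [G.card_neighborFinset_eq_degree]
    have h' : ((G.neighborFinset a ∩ G.neighborFinset b).card : ℝ)
        + ((G.neighborFinset a ∪ G.neighborFinset b).card : ℝ)
        = ((G.neighborFinset a).card : ℝ) + ((G.neighborFinset b).card : ℝ) := by
      exact_mod_cast congrArg (Nat.cast (R := ℝ)) h
    have hu' : ((G.neighborFinset a ∪ G.neighborFinset b).card : ℝ) ≤ (n : ℝ) := by
      exact_mod_cast hu
    linarith
  -- Build paths from the back: walks ending at y whose head is adjacent to x.
  have key : ∀ k, 1 ≤ k → k + 1 ≤ ℓ → ∃ (v : V) (q : G.Walk v y), q.IsPath ∧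
      q.length = k ∧ x ∉ q.support ∧ G.Adj x v := by
    intro k
    induction k with
    | zero => omega
    | succ m ih =>
      intro _ hle
      by_cases hm : 1 ≤ m
      · obtain ⟨v, q, hq, hlen, hxs, hadj⟩ := ih hm (by omega)
        -- pick w adjacent to v and x, not on q
        set S := (G.neighborFinset v ∩ G.neighborFinset x) \ q.support.toFinset with hS
        have hsupcard : (q.support.toFinset.card : ℝ) ≤ (m : ℝ) + 1 := by
          have h1 : q.support.toFinset.card ≤ q.support.length := q.support.toFinset_card_le
          have h2 : q.support.length = m + 1 := by rw [q.length_support, hlen]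
          have : q.support.toFinset.card ≤ m + 1 := by omega
          exact_mod_cast this
        have hlt : q.support.toFinset.card < (G.neighborFinset v ∩ G.neighborFinset x).card := by
        -- m + 1 ≤ ℓ - 1 < 0.8 n
          have hm1 : ((m : ℝ) + 1) ≤ (ℓ : ℝ) - 1 := by
            have : (m : ℕ) + 2 ≤ ℓ := hle
            have := (Nat.cast_le (α := ℝ)).2 this
            push_cast at this ⊢
            linarith
          have h08 := hinter v x
          have : (q.support.toFinset.card : ℝ)
              < ((G.neighborFinset v ∩ G.neighborFinset x).card : ℝ) := by
            linarith
          exact_mod_cast this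
        have hSne : S.Nonempty := by
          rw [← Finset.card_pos, hS]
          have h1 := Finset.le_card_sdiff q.support.toFinset
            (G.neighborFinset v ∩ G.neighborFinset x)
          omega
        obtain ⟨w, hw⟩ := hSne
        rw [hS, Finset.mem_sdiff, Finset.mem_inter, SimpleGraph.mem_neighborFinset,
          SimpleGraph.mem_neighborFinset, List.mem_toFinset] at hw
        obtain ⟨⟨hwv, hwx⟩, hws⟩ := hw
        refine ⟨w, SimpleGraph.Walk.cons hwv.symm q, hq.cons hws, by simp [hlen], ?_, hwx⟩
        simp only [SimpleGraph.Walk.support_cons, List.mem_cons]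
        push_neg
        exact ⟨G.ne_of_adj hwx, hxs⟩
      · -- m = 0, k = 1: pick v adjacent to both x and y
        have hm0 : m = 0 := by omega
        subst hm0
        have hSne : (G.neighborFinset x ∩ G.neighborFinset y).Nonempty := by
          rw [← Finset.card_pos]
          have h08 := hinter x y
          have : (0 : ℝ) < ((G.neighborFinset x ∩ G.neighborFinset y).card : ℝ) := by linarith
          exact_mod_cast this
        obtain ⟨v, hv⟩ := hSne
        rw [Finset.mem_inter, SimpleGraph.mem_neighborFinset,
          SimpleGraph.mem_neighborFinset] at hv
        obtain ⟨hvx, hvy⟩ := hv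
        refine ⟨v, SimpleGraph.Walk.cons hvy.symm SimpleGraph.Walk.nil, ?_, rfl, ?_, hvx⟩
        · simp [SimpleGraph.Walk.cons_isPath_iff, (G.ne_of_adj hvy).symm]
        · simp only [SimpleGraph.Walk.support_cons, SimpleGraph.Walk.support_nil,
            List.mem_cons, List.mem_singleton]
          push_neg
          exact ⟨G.ne_of_adj hvx, hxy, List.not_mem_nil⟩
  obtain ⟨v, q, hq, hlen, hxs, hadj⟩ := key (ℓ - 1) (by omega) (by omega)
  exact ⟨SimpleGraph.Walk.cons hadj q, hq.cons hxs, by simp [hlen]; omega⟩
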